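/- Let O be a commutative ring and p a prime number such that O is complete and separated for the p-adic topology. Let x, x' : ℕ → O be sequences with x_{n+1}^p ≡ x_n and (x'_{n+1})^p ≡ x'_n (mod pO) for all n, and let y, y' ∈ O be the unique elements with y ≡ x_n^{p^n} and y' ≡ (x'_n)^{p^n} (mod p^{n+1}O) for all n. Then the product sequence (x_n x'_n) satisfies (x_{n+1}x'_{n+1})^p ≡ x_n x'_n (mod pO), and the unique z ∈ O with z ≡ (x_n x'_n)^{p^n} (mod p^{n+1}O) for all n equals y·y'. Hence Fontaine's map θ̄ is multiplicative. -/

import Mathlib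

/-- Fontaine's map `θ̄` is multiplicative: if `y` and `y'` are the unique elements attached to
`p`-power-compatible sequences `x` and `x'`, then the product sequence is again compatible and
the element attached to it is `y * y'`. -/
theorem fontaine_theta_bar_multiplicative
    (O : Type*) [CommRing O] (p : ℕ) (hp : p.Prime)
    [IsAdicComplete (Ideal.span {(p : O)}) O]
    (x x' : ℕ → O)
    (hx : ∀ n, (p : O) ∣ x (n + 1) ^ p - x n)
    (hx' : ∀ n, (p : O) ∣ x' (n + 1) ^ p - x' n)
    (y y' : O)
    (hy : ∀ n, (p : O) ^ (n + 1) ∣ y - x n ^ p ^ n)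
    (hy' : ∀ n, (p : O) ^ (n + 1) ∣ y' - x' n ^ p ^ n) :
    (∀ n, (p : O) ∣ (x (n + 1) * x' (n + 1)) ^ p - x n * x' n) ∧
      ∀ z : O, (∀ n, (p : O) ^ (n + 1) ∣ z - (x n * x' n) ^ p ^ n) → z = y * y' := by
  constructor
  · intro n
    have : (x (n + 1) * x' (n + 1)) ^ p - x n * x' n
        = (x (n + 1) ^ p - x n) * x' (n + 1) ^ p + x n * (x' (n + 1) ^ p - x' n) := by
      ring
    rw [this]
    exact dvd_add (Dvd.dvd.mul_right (hx n) _) (Dvd.dvd.mul_left (hx' n) _)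
  · intro z hz
    have key : ∀ n, (p : O) ^ (n + 1) ∣ z - y * y' := by
      intro n
      have h1 := hz n
      have h2 := hy n
      have h3 := hy' n
      have : z - y * y' = (z - (x n * x' n) ^ p ^ n)
          - (y - x n ^ p ^ n) * y' - x n ^ p ^ n * (y' - x' n ^ p ^ n) := by
        rw [mul_pow]; ring
      rw [this]
      exact dvd_sub (dvd_sub h1 (h2.mul_right _)) (h3.mul_left _)
    have haus : IsHausdorff (Ideal.span {(p : O)}) O := inferInstance
    have : z - y * y' = 0 := by
      refine haus.haus' _ fun n => ?_
      rw [SModEq.zero, Ideal.span_singleton_pow, smul_eq_mul, Ideal.mul_top,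
        Ideal.mem_span_singleton]
      cases n with
      | zero => simp
      | succ m => exact key m
    exact sub_eq_zero.mp this
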